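/- Hook length formula for binary trees with multiplicities: for every binary tree with multiplicities T of size n, the number f(T) of packed words w (necessarily of length n) with B(w) = T equals n! divided by the product, over all nodes v of T, of |T_v|·(m(v) − 1)!, where T_v is the subtree of T rooted at v, |T_v| is its size, and m(v) is the multiplicity labelling v. -/

import Mathlib

open scoped Classical

/-- Words over the positive integers. -/
abbrev Word : Type := List ℕ+

/-- Evaluation of a word: number of occurrences of each letter. -/
def ev (w : Word) : ℕ+ → ℕ := fun a => w.count a

/-- A monoid congruence on the free monoid `(ℕ⁺)*`. -/
def IsCongruence (r : Word → Word → Prop) : Prop :=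
  Equivalence r ∧ ∀ u v u' v', r u v → r u' v' → r (u ++ u') (v ++ v')

/-- Restriction of a word to the letters belonging to a set `I`. -/
noncomputable def restrictTo (I : Set ℕ+) (w : Word) : Word :=
  w.filter fun a => decide (a ∈ I)

/-- `I` is an interval (order-convex subset) of `ℕ⁺`. -/
def IsIntervalSet (I : Set ℕ+) : Prop :=
  ∀ ⦃a b c : ℕ+⦄, a ∈ I → c ∈ I → a ≤ b → b ≤ c → b ∈ I

/-- Compatibility with restriction to alphabet intervals. -/
def CompatRestrict (r : Word → Word → Prop) : Prop :=
  ∀ I : Set ℕ+, IsIntervalSet I → ∀ u v, r u v → r (restrictTo I u) (restrictTo I v)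

/-- `r` is a `φ`-congruence. -/
def IsPhiCongruence (φ : Word → Word) (r : Word → Word → Prop) : Prop :=
  ∀ u v, r u v ↔ (r (φ u) (φ v) ∧ ev u = ev v)

/-- Standardization. -/
def std (w : Word) : Word :=
  (List.range w.length).map fun i =>
    ⟨((List.range w.length).countP fun j =>
        decide (w.getD j 1 < w.getD i 1 ∨ (w.getD j 1 = w.getD i 1 ∧ j < i))) + 1,
      Nat.succ_pos _⟩

/-- Packing. -/
def pack (w : Word) : Word :=
  w.map fun a => ⟨(w.dedup.countP fun b => decide (b < a)) + 1, Nat.succ_pos _⟩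

theorem parkBad_ex (w : Word) :
    ∃ d : ℕ, 1 ≤ d ∧ (w.countP fun a : ℕ+ => decide ((a : ℕ) ≤ d)) < d :=
  ⟨w.length + 1, Nat.succ_le_succ (Nat.zero_le _), by
    have h : (w.countP fun a : ℕ+ => decide ((a : ℕ) ≤ w.length + 1)) ≤ w.length :=
      List.countP_le_length
    omega⟩

/-- The smallest `d ≥ 1` such that fewer than `d` letters of `w` are `≤ d`. -/
noncomputable def parkBad (w : Word) : ℕ := Nat.find (parkBad_ex w)

/-- One pass of the parkization procedure, with fuel. -/
noncomputable def parkAux : ℕ → Word → Word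
  | 0, w => w
  | f + 1, w =>
    if parkBad w ≤ w.length then
      parkAux f (w.map fun a : ℕ+ => if parkBad w < (a : ℕ) then (a - 1 : ℕ+) else a)
    else w

/-- Parkization. The fuel `(sum of the letters)` always suffices,
since every pass strictly decreases the sum of the letters. -/
noncomputable def park (w : Word) : Word := parkAux (w.map fun a => (a : ℕ)).sum w

/-- Smallest monoid congruence containing `base`. -/
def CongClosure (base : Word → Word → Prop) (u v : Word) : Prop :=
  ∀ r : Word → Word → Prop, IsCongruence r → (∀ x y, base x y → r x y) → r u v

def sylvBase (x y : Word) : Prop :=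
  ∃ (a b c : ℕ+) (v : Word), a ≤ b ∧ b < c ∧
    x = a :: c :: (v ++ [b]) ∧ y = c :: a :: (v ++ [b])

/-- The sylvester congruence. -/
def sylv : Word → Word → Prop := CongClosure sylvBase

def stalBase (x y : Word) : Prop :=
  ∃ (a b : ℕ+) (v : Word), x = b :: a :: (v ++ [b]) ∧ y = a :: b :: (v ++ [b])

/-- The stalactic congruence. -/
def stal : Word → Word → Prop := CongClosure stalBase

def sylvSharpBase (x y : Word) : Prop :=
  ∃ (a b c : ℕ+) (v : Word), a < b ∧ b ≤ c ∧
    x = b :: (v ++ [a, c]) ∧ y = b :: (v ++ [c, a])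

/-- The #-sylvester congruence. -/
def sylvSharp : Word → Word → Prop := CongClosure sylvSharpBase

/-- The taïga congruence: join of the sylvester and stalactic congruences. -/
def taiga : Word → Word → Prop := CongClosure fun u v => sylv u v ∨ stal u v

/-- Planar binary trees with letter labels. -/
inductive BT : Type where
  | leaf : BT
  | node : BT → ℕ+ → BT → BT
deriving DecidableEq

/-- Binary search tree insertion of a letter. -/
def BT.insert : BT → ℕ+ → BT
  | .leaf, l => .node .leaf l .leaf
  | .node L b R, l => if l ≤ b then .node (L.insert l) b R else .node L b (R.insert l)

/-- Binary search tree of a word: insert the letters from right to left. -/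
def bst (w : Word) : BT := w.foldr (fun l t => t.insert l) .leaf

/-- Planar binary trees labelled by a letter and a multiplicity. -/
inductive BSTM : Type where
  | leaf : BSTM
  | node : BSTM → ℕ+ → ℕ+ → BSTM → BSTM   -- left, letter, multiplicity, right
deriving DecidableEq

/-- Insertion of a letter into a binary search tree with multiplicities. -/
def BSTM.insert : BSTM → ℕ+ → BSTM
  | .leaf, l => .node .leaf l 1 .leaf
  | .node L l' k R, l =>
    if l = l' then .node L l' (k + 1) R
    else if l < l' then .node (L.insert l) l' k R
    else .node L l' k (R.insert l)

/-- The `P`-symbol: insert the letters of `w` from right to left. -/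
def Pmap (w : Word) : BSTM := w.foldr (fun l t => t.insert l) .leaf

/-- Letters of a BSTM in left-to-right (infix) order. -/
def BSTM.letters : BSTM → List ℕ+
  | .leaf => []
  | .node L l _ R => L.letters ++ l :: R.letters

/-- The binary search tree property for a BSTM. -/
def BSTM.IsSearchTree : BSTM → Prop
  | .leaf => True
  | .node L l _ R =>
      (∀ x ∈ L.letters, x < l) ∧ (∀ x ∈ R.letters, l < x) ∧
        L.IsSearchTree ∧ R.IsSearchTree

/-- Total multiplicity of a letter in a BSTM. -/
def BSTM.mult : BSTM → ℕ+ → ℕ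
  | .leaf, _ => 0
  | .node L l k R, a => L.mult a + (if a = l then (k : ℕ) else 0) + R.mult a

/-- Size of a BSTM: sum of the multiplicities. -/
def BSTM.size : BSTM → ℕ
  | .leaf => 0
  | .node L _ k R => L.size + (k : ℕ) + R.size

/-- Planar binary trees with multiplicities. -/
inductive BTM : Type where
  | leaf : BTM
  | node : BTM → ℕ+ → BTM → BTM
deriving DecidableEq

/-- Size of a BTM: sum of the multiplicities. -/
def BTM.size : BTM → ℕ
  | .leaf => 0
  | .node L k R => L.size + (k : ℕ) + R.size

/-- Number of nodes of a BTM. -/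
def BTM.numNodes : BTM → ℕ
  | .leaf => 0
  | .node L _ R => L.numNodes + 1 + R.numNodes

/-- Forgetting the letters of a BSTM gives a BTM. -/
def forgetLetters : BSTM → BTM
  | .leaf => .leaf
  | .node L _ k R => .node (forgetLetters L) k (forgetLetters R)

/-- The `B`-symbol: the BTM underlying `P(w)`. -/
def Bmap (w : Word) : BTM := forgetLetters (Pmap w)

/-- A packed word: its set of letters is `{1, …, k}` for some `k`. -/
def IsPacked (w : Word) : Prop := ∀ a ∈ w, ∀ b : ℕ+, b ≤ a → b ∈ w

/-- Number of packed words inserting to the BTM `T`. -/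
noncomputable def fT (T : BTM) : ℕ :=
  Set.ncard {w : Word | IsPacked w ∧ Bmap w = T}

/-- The hook-type product over the subtrees of a BTM. -/
def hookProd : BTM → ℕ
  | .leaf => 1
  | .node L k R =>
      (BTM.node L k R).size * ((k : ℕ) - 1).factorial * hookProd L * hookProd R

/-- Label the nodes of a BTM in infix order starting from a given letter;
returns the labelled tree and the next unused letter. -/
def infixLabelAux : BTM → ℕ+ → BSTM × ℕ+
  | .leaf, n => (.leaf, n)
  | .node L k R, n =>
    let p := infixLabelAux L n
    let q := infixLabelAux R (p.2 + 1)
    (.node p.1 p.2 k q.1, q.2)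

/-- Label the nodes of a BTM by `1, …, k` in infix order. -/
def infixLabel (T : BTM) : BSTM := (infixLabelAux T 1).1

/-! ### Auxiliary development for the hook length formula -/

section HookAux

/-- Relabelling the letters of a BSTM. -/
def BSTM.mapL (f : ℕ+ → ℕ+) : BSTM → BSTM
  | .leaf => .leaf
  | .node L l k R => .node (L.mapL f) (f l) k (R.mapL f)

lemma Pmap_nil : Pmap [] = .leaf := rfl

lemma Pmap_cons (x : ℕ+) (w : Word) : Pmap (x :: w) = (Pmap w).insert x := rfl

lemma BSTM.insert_ne_leaf (t : BSTM) (x : ℕ+) : t.insert x ≠ .leaf := by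
  cases t with
  | leaf => simp [BSTM.insert]
  | node L l k R =>
    simp only [BSTM.insert]
    split_ifs <;> simp

lemma BSTM.size_insert (t : BSTM) (x : ℕ+) : (t.insert x).size = t.size + 1 := by
  induction t with
  | leaf => simp [BSTM.insert, BSTM.size]
  | node L l k R ihL ihR =>
    simp only [BSTM.insert]
    split_ifs with h1 h2 <;> simp [BSTM.size, ihL, ihR, PNat.add_coe] <;> omega

lemma size_Pmap (w : Word) : (Pmap w).size = w.length := by
  induction w with
  | nil => rfl
  | cons x w ih => rw [Pmap_cons, BSTM.size_insert, ih]; rfl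

lemma size_forgetLetters (t : BSTM) : (forgetLetters t).size = t.size := by
  induction t with
  | leaf => rfl
  | node L l k R ihL ihR => simp [forgetLetters, BTM.size, BSTM.size, ihL, ihR]

lemma length_of_Bmap {w : Word} {T : BTM} (h : Bmap w = T) : w.length = T.size := by
  rw [← h, Bmap, size_forgetLetters, size_Pmap]

lemma BSTM.insert_mapL {f : ℕ+ → ℕ+} (hf : StrictMono f) (t : BSTM) (x : ℕ+) :
    (t.mapL f).insert (f x) = (t.insert x).mapL f := by
  induction t with
  | leaf => simp [BSTM.insert, BSTM.mapL]
  | node L l k R ihL ihR =>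
    simp only [BSTM.insert, BSTM.mapL, hf.injective.eq_iff, hf.lt_iff_lt]
    split_ifs <;> simp [BSTM.mapL, ihL, ihR]

lemma Pmap_map {f : ℕ+ → ℕ+} (hf : StrictMono f) (w : Word) :
    Pmap (w.map f) = (Pmap w).mapL f := by
  induction w with
  | nil => rfl
  | cons x w ih => simp [Pmap_cons, ih, BSTM.insert_mapL hf]

lemma forgetLetters_mapL (f : ℕ+ → ℕ+) (t : BSTM) :
    forgetLetters (t.mapL f) = forgetLetters t := by
  induction t with
  | leaf => rfl
  | node L l k R ihL ihR => simp [BSTM.mapL, forgetLetters, ihL, ihR]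

lemma Bmap_map {f : ℕ+ → ℕ+} (hf : StrictMono f) (w : Word) :
    Bmap (w.map f) = Bmap w := by
  rw [Bmap, Pmap_map hf, forgetLetters_mapL]; rfl

end HookAux

section Decomp

lemma PNat.coe_inj' {k k' : ℕ+} (h : (k : ℕ) = (k' : ℕ)) : k = k' := PNat.coe_injective h

lemma Pmap_decomp (a : ℕ+) : ∀ (w : Word) (h : w ≠ []), w.getLast h = a →
    ∀ k : ℕ+, (k : ℕ) = w.count a →
    Pmap w = .node (Pmap (w.filter (fun x => decide (x < a)))) a k
      (Pmap (w.filter (fun x => decide (a < x)))) := by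
  intro w
  induction w with
  | nil => intro h; exact absurd rfl h
  | cons x w ih =>
    intro h hlast k hk
    cases w with
    | nil =>
      simp only [List.getLast_singleton] at hlast
      subst hlast
      simp only [List.count_cons, List.count_nil, List.filter_cons, List.filter_nil,
        decide_eq_true_eq, lt_self_iff_false, if_false, if_true, beq_self_eq_true] at hk ⊢
      have hk1 : k = 1 := PNat.coe_inj' (by simpa using hk)
      subst hk1
      simp [Pmap, BSTM.insert]
    | cons y t =>
      have hne : y :: t ≠ [] := List.cons_ne_nil _ _
      have hlast' : (y :: t).getLast hne = a := by
        rw [← hlast]; exact (List.getLast_cons hne).symm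
      have hamem : a ∈ y :: t := hlast' ▸ List.getLast_mem hne
      have hcpos : 0 < (y :: t).count a := List.count_pos_iff.mpr hamem
      set k' : ℕ+ := ⟨(y :: t).count a, hcpos⟩ with hk'
      have ih' := ih hne hlast' k' rfl
      rw [Pmap_cons, ih']
      rcases lt_trichotomy x a with hx | hx | hx
      · have hxa : x ≠ a := ne_of_lt hx
        have : (k : ℕ) = (k' : ℕ) := by
          rw [hk, hk']; simp [List.count_cons, hxa]
        have hkk : k = k' := PNat.coe_inj' this
        subst hkk
        simp only [BSTM.insert, if_neg hxa, if_pos hx]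
        rw [← Pmap_cons]
        simp [List.filter_cons, hx, not_lt_of_gt hx, le_of_lt hx, not_lt.mpr (le_of_lt hx)]
      · subst hx
        have : (k : ℕ) = (k' : ℕ) + 1 := by
          rw [hk, hk']; simp [List.count_cons]
        have hkk : k = k' + 1 := PNat.coe_inj' (by simpa using this)
        subst hkk
        simp only [BSTM.insert, if_pos rfl]
        simp [List.filter_cons, lt_irrefl]
      · have hxa : x ≠ a := (ne_of_lt hx).symm
        have : (k : ℕ) = (k' : ℕ) := by
          rw [hk, hk']; simp [List.count_cons, hxa]
        have hkk : k = k' := PNat.coe_inj' this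
        subst hkk
        simp only [BSTM.insert, if_neg hxa, if_neg (not_lt.mpr (le_of_lt hx))]
        rw [← Pmap_cons]
        simp [List.filter_cons, hx, not_lt_of_gt hx]

end Decomp
section Alphabet

lemma BSTM.mem_letters_insert (t : BSTM) (x y : ℕ+) :
    y ∈ (t.insert x).letters ↔ y = x ∨ y ∈ t.letters := by
  induction t with
  | leaf => simp [BSTM.insert, BSTM.letters]
  | node L l k R ihL ihR =>
    simp only [BSTM.insert]
    split_ifs with h1 h2
    · subst h1; simp [BSTM.letters]; tauto
    · simp [BSTM.letters, ihL]; tauto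
    · simp [BSTM.letters, ihR]; tauto

lemma mem_letters_Pmap (w : Word) (y : ℕ+) : y ∈ (Pmap w).letters ↔ y ∈ w := by
  induction w with
  | nil => simp [Pmap, BSTM.letters]
  | cons x w ih => rw [Pmap_cons, BSTM.mem_letters_insert, ih]; simp

lemma BSTM.letters_insert_perm_or (t : BSTM) (x : ℕ+) :
    (t.insert x).letters = t.letters ∨ True := Or.inr trivial

lemma BSTM.isSearchTree_insert {t : BSTM} (ht : t.IsSearchTree) (x : ℕ+) :
    (t.insert x).IsSearchTree := by
  induction t with
  | leaf => simp [BSTM.insert, BSTM.IsSearchTree, BSTM.letters]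
  | node L l k R ihL ihR =>
    obtain ⟨hL, hR, hLst, hRst⟩ := ht
    simp only [BSTM.insert]
    split_ifs with h1 h2
    · exact ⟨hL, hR, hLst, hRst⟩
    · refine ⟨?_, hR, ihL hLst, hRst⟩
      intro y hy
      rcases (BSTM.mem_letters_insert L x y).mp hy with rfl | hy
      · exact h2
      · exact hL y hy
    · refine ⟨hL, ?_, hLst, ihR hRst⟩
      intro y hy
      rcases (BSTM.mem_letters_insert R x y).mp hy with rfl | hy
      · exact lt_of_le_of_ne (not_lt.mp h2) (Ne.symm h1)
      · exact hR y hy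

lemma isSearchTree_Pmap (w : Word) : (Pmap w).IsSearchTree := by
  induction w with
  | nil => trivial
  | cons x w ih => exact BSTM.isSearchTree_insert ih x

lemma BSTM.nodup_letters {t : BSTM} (ht : t.IsSearchTree) : t.letters.Nodup := by
  induction t with
  | leaf => simp [BSTM.letters]
  | node L l k R ihL ihR =>
    obtain ⟨hL, hR, hLst, hRst⟩ := ht
    simp only [BSTM.letters, List.nodup_append, List.nodup_cons]
    refine ⟨ihL hLst, ⟨?_, ihR hRst⟩, ?_⟩
    · intro hl; exact absurd (hR l hl) (lt_irrefl l)
    · intro y hyL z hyR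
      rw [List.mem_cons] at hyR
      rcases hyR with rfl | hyR
      · exact ne_of_lt (hL _ hyL)
      · exact ne_of_lt ((hL y hyL).trans (hR z hyR))

lemma numNodes_forgetLetters (t : BSTM) : (forgetLetters t).numNodes = t.letters.length := by
  induction t with
  | leaf => rfl
  | node L l k R ihL ihR =>
    simp [forgetLetters, BTM.numNodes, BSTM.letters, ihL, ihR]; omega

/-- The alphabet of a packed word `w` with `Bmap w = T` is `{1, …, T.numNodes}`. -/
lemma packed_alphabet {w : Word} {T : BTM} (hp : IsPacked w) (hB : Bmap w = T) :
    ∀ x : ℕ+, x ∈ w ↔ (x : ℕ) ≤ T.numNodes := by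
  classical
  set A : Finset ℕ+ := (Pmap w).letters.toFinset with hA
  have hmemA : ∀ x : ℕ+, x ∈ A ↔ x ∈ w := by
    intro x; rw [hA, List.mem_toFinset, mem_letters_Pmap]
  have hcard : A.card = T.numNodes := by
    rw [hA, List.toFinset_card_of_nodup (BSTM.nodup_letters (isSearchTree_Pmap w)),
      ← numNodes_forgetLetters, ← Bmap, hB]
  have hdc : ∀ x ∈ A, ∀ b : ℕ+, b ≤ x → b ∈ A := by
    intro x hx b hb
    rw [hmemA] at hx ⊢
    exact hp x hx b hb
  intro x
  rw [← hmemA, ← hcard]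
  constructor
  · intro hx
    have hsub : Finset.Icc 1 x ⊆ A := by
      intro b hb
      rw [Finset.mem_Icc] at hb
      exact hdc x hx b hb.2
    have := Finset.card_le_card hsub
    rw [PNat.card_Icc] at this
    simpa using this
  · intro hx
    by_contra hxA
    have hsub : A ⊆ Finset.Ico 1 x := by
      intro b hb
      rw [Finset.mem_Ico]
      refine ⟨b.one_le, ?_⟩
      by_contra hbx
      exact hxA (hdc b hb x (not_lt.mp hbx))
    have hc := Finset.card_le_card hsub
    rw [PNat.card_Ico] at hc
    have hx1 : (1:ℕ) ≤ (x:ℕ) := x.one_le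
    rcases eq_or_lt_of_le x.one_le with h1 | h1
    · subst h1
      have : A.card ≤ 0 := by simpa [Finset.Ico_self] using Finset.card_le_card hsub
      omega
    · rw [PNat.one_coe] at hc
      omega

end Alphabet
section Merge

/-- Classify a letter as smaller, equal or bigger than `a`. -/
def classify (a x : ℕ+) : Fin 3 := if x < a then 0 else if x = a then 1 else 2

/-- Merge a word of small letters and a word of big letters according to a mask. -/
def merge (a : ℕ+) : List (Fin 3) → Word → Word → Word
  | [], _, _ => []
  | c :: m, u, v =>
    if c = 0 then u.headD 1 :: merge a m u.tail v
    else if c = 1 then a :: merge a m u v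
    else v.headD 1 :: merge a m u v.tail

lemma fin3_cases (c : Fin 3) : c = 0 ∨ c = 1 ∨ c = 2 := by revert c; decide

lemma merge_cons0 (a : ℕ+) (m : List (Fin 3)) (u v : Word) :
    merge a (0 :: m) u v = u.headD 1 :: merge a m u.tail v := by simp [merge]

lemma merge_cons1 (a : ℕ+) (m : List (Fin 3)) (u v : Word) :
    merge a (1 :: m) u v = a :: merge a m u v := by simp [merge]

lemma merge_cons2 (a : ℕ+) (m : List (Fin 3)) (u v : Word) :
    merge a (2 :: m) u v = v.headD 1 :: merge a m u v.tail := by simp [merge]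

lemma merge_split (a : ℕ+) (w : Word) :
    merge a (w.map (classify a)) (w.filter (fun x => decide (x < a)))
      (w.filter (fun x => decide (a < x))) = w := by
  induction w with
  | nil => rfl
  | cons x t ih =>
    rcases lt_trichotomy x a with hx | hx | hx
    · have h0 : classify a x = 0 := by simp [classify, hx]
      have hna : ¬ a < x := asymm hx
      simp only [List.map_cons, List.filter_cons, h0, decide_eq_true_eq, hx, hna, if_true,
        if_false, merge_cons0, List.headD_cons, List.tail_cons]
      rw [ih]
    · subst hx
      have h0 : classify x x = 1 := by simp [classify]
      simp only [List.map_cons, List.filter_cons, h0, decide_eq_true_eq, lt_irrefl, if_false,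
        merge_cons1]
      rw [ih]
    · have h0 : classify a x = 2 := by
        simp [classify, not_lt.mpr (le_of_lt hx), (ne_of_lt hx).symm]
      have hna : ¬ x < a := asymm hx
      simp only [List.map_cons, List.filter_cons, h0, decide_eq_true_eq, hx, hna, if_true,
        if_false, merge_cons2, List.headD_cons, List.tail_cons]
      rw [ih]

lemma merge_spec (a : ℕ+) : ∀ (m : List (Fin 3)) (u v : Word),
    (∀ x ∈ u, x < a) → (∀ x ∈ v, a < x) →
    m.count 0 = u.length → m.count 2 = v.length →
    (merge a m u v).filter (fun x => decide (x < a)) = u ∧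
    (merge a m u v).filter (fun x => decide (a < x)) = v ∧
    (merge a m u v).count a = m.count 1 ∧
    (merge a m u v).map (classify a) = m := by
  intro m
  induction m with
  | nil =>
    intro u v hu hv hcu hcv
    simp only [List.count_nil] at hcu hcv
    rw [List.eq_nil_of_length_eq_zero hcu.symm, List.eq_nil_of_length_eq_zero hcv.symm]
    simp [merge]
  | cons c m ih =>
    intro u v hu hv hcu hcv
    rcases fin3_cases c with rfl | rfl | rfl
    · -- c = 0
      simp only [List.count_cons] at hcu hcv
      norm_num at hcu hcv
      cases u with
      | nil => simp at hcu
      | cons x u' =>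
        have hx : x < a := hu x List.mem_cons_self
        have h0 : classify a x = 0 := by simp [classify, hx]
        obtain ⟨h1, h2, h3, h4⟩ := ih u' v (fun y hy => hu y (List.mem_cons_of_mem _ hy)) hv
          (by simpa using hcu) hcv
        simp only [merge_cons0, List.headD_cons, List.tail_cons]
        refine ⟨?_, ?_, ?_, ?_⟩
        · rw [List.filter_cons, if_pos (by simpa using hx), h1]
        · rw [List.filter_cons, if_neg (by simpa using asymm hx), h2]
        · rw [List.count_cons, h3, List.count_cons]
          simp [ne_of_lt hx]
        · rw [List.map_cons, h0, h4]
    · -- c = 1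
      simp only [List.count_cons] at hcu hcv
      norm_num at hcu hcv
      obtain ⟨h1, h2, h3, h4⟩ := ih u v hu hv hcu hcv
      simp only [merge_cons1]
      refine ⟨?_, ?_, ?_, ?_⟩
      · rw [List.filter_cons, if_neg (by simp), h1]
      · rw [List.filter_cons, if_neg (by simp), h2]
      · rw [List.count_cons, h3, List.count_cons]; simp
      · rw [List.map_cons, h4]
        congr 1
        simp [classify]
    · -- c = 2
      simp only [List.count_cons] at hcu hcv
      norm_num at hcu hcv
      cases v with
      | nil => simp at hcv
      | cons x v' =>
        have hx : a < x := hv x List.mem_cons_self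
        have h0 : classify a x = 2 := by
          simp [classify, not_lt.mpr (le_of_lt hx), (ne_of_lt hx).symm]
        obtain ⟨h1, h2, h3, h4⟩ := ih u v' hu (fun y hy => hv y (List.mem_cons_of_mem _ hy))
          hcu (by simpa using hcv)
        simp only [merge_cons2, List.headD_cons, List.tail_cons]
        refine ⟨?_, ?_, ?_, ?_⟩
        · rw [List.filter_cons, if_neg (by simpa using asymm hx), h1]
        · rw [List.filter_cons, if_pos (by simpa using hx), h2]
        · rw [List.count_cons, h3, List.count_cons]
          simp [(ne_of_lt hx).symm]
        · rw [List.map_cons, h0, h4]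

lemma mem_merge {a : ℕ+} {m : List (Fin 3)} {u v : Word}
    (hu : ∀ x ∈ u, x < a) (hv : ∀ x ∈ v, a < x)
    (hcu : m.count 0 = u.length) (hcv : m.count 2 = v.length) :
    ∀ x ∈ merge a m u v, x ∈ u ∨ x = a ∨ x ∈ v := by
  obtain ⟨h1, h2, -, -⟩ := merge_spec a m u v hu hv hcu hcv
  intro x hx
  rcases lt_trichotomy x a with h | h | h
  · left; rw [← h1]; exact List.mem_filter.mpr ⟨hx, by simpa using h⟩
  · right; left; exact h
  · right; right; rw [← h2]; exact List.mem_filter.mpr ⟨hx, by simpa using h⟩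

end Merge
section Bijection

/-- Words counted by `fT`. -/
def SW (T : BTM) : Set Word := {w | IsPacked w ∧ Bmap w = T}

/-- Masks with prescribed numbers of `0`s, `1`s, `2`s. -/
def MaskSet (p q r : ℕ) : Set (List (Fin 3)) :=
  {m | m.count 0 = p ∧ m.count 1 = q ∧ m.count 2 = r}

/-- The root letter of packed words inserting to `BTM.node L k R`. -/
def root (L : BTM) : ℕ+ := ⟨L.numNodes + 1, Nat.succ_pos _⟩

lemma coe_root (L : BTM) : (root L : ℕ) = L.numNodes + 1 := rfl

lemma SW_lt_root {L : BTM} {u : Word} (hu : u ∈ SW L) : ∀ x ∈ u, x < root L := by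
  intro x hx
  have := (packed_alphabet hu.1 hu.2 x).mp hx
  have : (x : ℕ) < (root L : ℕ) := by rw [coe_root]; omega
  exact this

lemma add_root_strictMono (a : ℕ+) : StrictMono (fun x : ℕ+ => x + a) :=
  fun _ _ h => add_lt_add_left h a

lemma pnat_sub_add {a x : ℕ+} (h : a < x) : (x - a) + a = x := by
  apply PNat.coe_injective
  rw [PNat.add_coe, PNat.sub_coe, if_pos h]
  have : (a : ℕ) < (x : ℕ) := h
  omega

lemma pnat_lt_add_left (a b : ℕ+) : a < b + a := by
  have hb := b.pos
  have : (a : ℕ) < (b : ℕ) + (a : ℕ) := by omega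
  exact this

lemma pnat_add_sub (a b : ℕ+) : (b + a) - a = b := by
  apply PNat.coe_injective
  rw [PNat.sub_coe, if_pos (pnat_lt_add_left a b), PNat.add_coe]
  omega

lemma Bmap_eq_leaf_iff (w : Word) : Bmap w = BTM.leaf ↔ w = [] := by
  constructor
  · intro h
    cases w with
    | nil => rfl
    | cons x t =>
      exfalso
      rw [Bmap, Pmap_cons] at h
      rcases h' : (Pmap t).insert x with _ | _
      · exact BSTM.insert_ne_leaf _ _ h'
      · rw [h'] at h; simp [forgetLetters] at h
  · rintro rfl; rfl

/-- The counts of the classification mask of a word. -/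
lemma count_map_classify (a : ℕ+) (l : Word) :
    (l.map (classify a)).count 0 = (l.filter (fun x => decide (x < a))).length ∧
    (l.map (classify a)).count 1 = l.count a ∧
    (l.map (classify a)).count 2 = (l.filter (fun x => decide (a < x))).length := by
  induction l with
  | nil => simp
  | cons x t ih =>
    obtain ⟨ih0, ih1, ih2⟩ := ih
    rcases lt_trichotomy x a with hx | hx | hx
    · have h0 : classify a x = 0 := by simp [classify, hx]
      simp only [List.map_cons, h0, List.count_cons, List.filter_cons, decide_eq_true_eq,
        hx, asymm hx, if_true, if_false]
      refine ⟨by simp [ih0], ?_, by simp [ih2]⟩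
      rw [ih1]; simp [ne_of_lt hx]
    · subst hx
      have h0 : classify x x = 1 := by simp [classify]
      simp only [List.map_cons, h0, List.count_cons, List.filter_cons, decide_eq_true_eq,
        lt_irrefl, if_false]
      refine ⟨by simp [ih0], ?_, by simp [ih2]⟩
      simp [ih1]
    · have h0 : classify a x = 2 := by
        simp [classify, not_lt.mpr (le_of_lt hx), (ne_of_lt hx).symm]
      simp only [List.map_cons, h0, List.count_cons, List.filter_cons, decide_eq_true_eq,
        hx, asymm hx, if_true, if_false]
      refine ⟨by simp [ih0], ?_, by simp [ih2]⟩
      rw [ih1]; simp [(ne_of_lt hx).symm]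

/-- The central characterization of packed words inserting to a node. -/
lemma mem_SW_node {L R : BTM} {k : ℕ+} (w : Word) :
    w ∈ SW (BTM.node L k R) ↔
    ∃ m u v, m ∈ MaskSet L.size ((k : ℕ) - 1) R.size ∧ u ∈ SW L ∧ v ∈ SW R ∧
      w = merge (root L) m u (v.map (· + root L)) ++ [root L] := by
  set a := root L with ha
  constructor
  · rintro ⟨hw, hB⟩
    -- w is nonempty
    have hlen : w.length = L.size + (k : ℕ) + R.size := length_of_Bmap hB
    have hne : w ≠ [] := by
      apply List.ne_nil_of_length_pos
      have := k.pos; omega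
    set a' := w.getLast hne with ha'
    have hmem : a' ∈ w := List.getLast_mem hne
    have hcpos : 0 < w.count a' := List.count_pos_iff.mpr hmem
    have hdec := Pmap_decomp a' w hne rfl ⟨w.count a', hcpos⟩ rfl
    set u' := w.filter (fun x => decide (x < a')) with hu'
    set v' := w.filter (fun x => decide (a' < x)) with hv'
    have hBw : Bmap w = BTM.node (Bmap u') ⟨w.count a', hcpos⟩ (Bmap v') := by
      rw [Bmap, hdec]; rfl
    rw [hB] at hBw
    obtain ⟨hL, hk, hR⟩ : L = Bmap u' ∧ k = ⟨w.count a', hcpos⟩ ∧ R = Bmap v' := by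
      cases hBw; exact ⟨rfl, rfl, rfl⟩
    -- u' is packed
    have hu'p : IsPacked u' := by
      intro x hx b hb
      rw [hu', List.mem_filter, decide_eq_true_eq] at hx ⊢
      exact ⟨hw x hx.1 b hb, lt_of_le_of_lt hb hx.2⟩
    have halph := packed_alphabet hu'p hL.symm
    -- the last letter is the root letter
    have ha'a : a' = a := by
      apply PNat.coe_injective
      rw [ha, coe_root]
      by_contra hne'
      rcases Nat.lt_or_ge (a' : ℕ) (L.numNodes + 1) with h | h
      · -- a' ≤ numNodes L, so a' ∈ u', absurd
        have : a' ∈ u' := (halph a').mpr (by omega)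
        rw [hu', List.mem_filter, decide_eq_true_eq] at this
        exact absurd this.2 (lt_irrefl a')
      · have hlt : a < a' := by
          have : (a : ℕ) < (a' : ℕ) := by rw [ha, coe_root]; omega
          exact this
        have haw : a ∈ w := hw a' hmem a (le_of_lt hlt)
        have : a ∈ u' := by rw [hu', List.mem_filter, decide_eq_true_eq]; exact ⟨haw, hlt⟩
        have := (halph a).mp this
        rw [ha, coe_root] at this
        omega
    have hkn : (k : ℕ) = w.count a' := congrArg (fun t : ℕ+ => (t : ℕ)) hk
    rw [ha'a] at hu' hv' hmem hkn
    -- the shifted big part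
    set v := v'.map (fun x => x - a) with hv
    have hv'mem : ∀ x ∈ v', a < x := by
      intro x hx
      rw [hv', List.mem_filter, decide_eq_true_eq] at hx
      exact hx.2
    have hvshift : v.map (fun x => x + a) = v' := by
      rw [hv, List.map_map]
      have : ∀ x ∈ v', ((fun x => x + a) ∘ fun x => x - a) x = id x := by
        intro x hx
        simp only [Function.comp_apply, id_eq]
        exact pnat_sub_add (hv'mem x hx)
      rw [List.map_congr_left this, List.map_id]
    have hvp : IsPacked v := by
      intro y hy b hb
      rw [hv, List.mem_map] at hy ⊢
      obtain ⟨x, hx, rfl⟩ := hy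
      refine ⟨b + a, ?_, pnat_add_sub a b⟩
      have hba : b + a ≤ x := by
        calc b + a ≤ (x - a) + a := add_le_add_left hb a
        _ = x := pnat_sub_add (hv'mem x hx)
      rw [hv', List.mem_filter, decide_eq_true_eq] at hx ⊢
      exact ⟨hw x hx.1 (b + a) hba, pnat_lt_add_left a b⟩
    have hBv : Bmap v = R := by
      rw [hR, ← hvshift, Bmap_map (add_root_strictMono a)]
    -- the mask
    set w0 := w.dropLast with hw0
    have hwsplit : w0 ++ [a] = w := by
      rw [hw0, ← ha'a]
      exact List.dropLast_append_getLast hne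
    have hfu : w0.filter (fun x => decide (x < a)) = u' := by
      rw [hu', ← hwsplit, List.filter_append]
      simp
    have hfv : w0.filter (fun x => decide (a < x)) = v' := by
      rw [hv', ← hwsplit, List.filter_append]
      simp
    have hfc : w0.count a + 1 = w.count a := by
      rw [← hwsplit, List.count_append]
      simp
    obtain ⟨hm0, hm1, hm2⟩ := count_map_classify a w0
    refine ⟨w0.map (classify a), u', v, ⟨?_, ?_, ?_⟩, ⟨hu'p, hL.symm⟩, ⟨hvp, hBv⟩, ?_⟩
    · rw [hm0, hfu, ← length_of_Bmap hL.symm]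
    · rw [hm1]
      omega
    · rw [hm2, hfv, ← length_of_Bmap hR.symm]
    · rw [hvshift, ← hwsplit]
      congr 1
      rw [← hfu, ← hfv]
      exact (merge_split a w0).symm
  · rintro ⟨m, u, v, ⟨hm0, hm1, hm2⟩, hu, hv, rfl⟩
    set vs := v.map (fun x => x + a) with hvs
    have hul : ∀ x ∈ u, x < a := SW_lt_root hu
    have hvl : ∀ x ∈ vs, a < x := by
      rintro x hx
      rw [hvs, List.mem_map] at hx
      obtain ⟨y, hy, rfl⟩ := hx
      exact pnat_lt_add_left a y
    have hcu : m.count 0 = u.length := by rw [hm0, length_of_Bmap hu.2]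
    have hcv : m.count 2 = vs.length := by
      rw [hm2, hvs, List.length_map, length_of_Bmap hv.2]
    obtain ⟨h1, h2, h3, h4⟩ := merge_spec a m u vs hul hvl hcu hcv
    set g := merge a m u vs with hg
    have humem : ∀ x ∈ u, x ∈ g := by
      intro x hx
      rw [← h1] at hx
      exact (List.mem_filter.mp hx).1
    have hvmem : ∀ x ∈ vs, x ∈ g := by
      intro x hx
      rw [← h2] at hx
      exact (List.mem_filter.mp hx).1
    constructor
    · -- packed
      intro x hx b hb
      rw [List.mem_append]
      rcases lt_trichotomy b a with hba | hba | hba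
      · left
        apply humem
        have : (b : ℕ) ≤ L.numNodes := by
          have : (b : ℕ) < (a : ℕ) := hba
          rw [ha, coe_root] at this
          omega
        exact (packed_alphabet hu.1 hu.2 b).mpr this
      · right; simp [hba]
      · left
        have hxg : x ∈ vs := by
          have hax : a < x := lt_of_lt_of_le hba hb
          rw [List.mem_append] at hx
          rcases hx with hx | hx
          · rcases mem_merge hul hvl hcu hcv x hx with h | h | h
            · exact absurd (hul x h) (asymm hax)
            · exact absurd h (ne_of_gt hax)
            · exact h
          · simp at hx
            rw [hx] at hax
            exact absurd hax (lt_irrefl a)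
        apply hvmem
        rw [hvs, List.mem_map] at hxg ⊢
        obtain ⟨y, hy, rfl⟩ := hxg
        refine ⟨b - a, hv.1 y hy (b - a) ?_, pnat_sub_add hba⟩
        have : (b - a) + a ≤ y + a := by rw [pnat_sub_add hba]; exact hb
        exact le_of_add_le_add_right this
    · -- Bmap
      have hne : g ++ [a] ≠ [] := by simp
      have hlast : (g ++ [a]).getLast hne = a := by
        simp
      have hcnt : (g ++ [a]).count a = m.count 1 + 1 := by
        rw [List.count_append, h3]; simp
      have hkpos : 0 < (g ++ [a]).count a := by rw [hcnt]; omega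
      have hdec := Pmap_decomp a (g ++ [a]) hne hlast ⟨(g ++ [a]).count a, hkpos⟩ rfl
      have hfu : (g ++ [a]).filter (fun x => decide (x < a)) = u := by
        rw [List.filter_append, h1]; simp
      have hfv : (g ++ [a]).filter (fun x => decide (a < x)) = vs := by
        rw [List.filter_append, h2]; simp
      have hkk : (⟨(g ++ [a]).count a, hkpos⟩ : ℕ+) = k := by
        apply PNat.coe_injective
        have h1k : (1:ℕ) ≤ (k:ℕ) := k.one_le
        show (g ++ [a]).count a = (k : ℕ)
        rw [hcnt, hm1]
        omega
      rw [Bmap, hdec, hfu, hfv, hkk]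
      have : Bmap vs = R := by rw [hvs, Bmap_map (add_root_strictMono a), hv.2]
      show BTM.node (Bmap u) k (Bmap vs) = BTM.node L k R
      rw [this, hu.2]

end Bijection
section Counting

lemma ncard_prod' {α β : Type*} (s : Set α) (t : Set β) :
    (s ×ˢ t).ncard = s.ncard * t.ncard := by
  rw [← Nat.card_coe_set_eq, ← Nat.card_coe_set_eq, ← Nat.card_coe_set_eq,
    ← Nat.card_prod]
  exact Nat.card_congr (Equiv.Set.prod s t)

lemma count_sum_fin3 (l : List (Fin 3)) :
    l.count 0 + l.count 1 + l.count 2 = l.length := by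
  induction l with
  | nil => simp
  | cons c t ih =>
    rcases fin3_cases c with rfl | rfl | rfl <;>
      simp [List.count_cons] <;> omega

lemma maskset_finite (p q r : ℕ) : (MaskSet p q r).Finite := by
  apply Set.Finite.subset (List.finite_length_eq (Fin 3) (p + q + r))
  rintro m ⟨h0, h1, h2⟩
  have := count_sum_fin3 m
  simp only [Set.mem_setOf_eq]
  omega

lemma cons_inj_fin3 (c : Fin 3) : Function.Injective (List.cons c) := by
  intro x y h
  injection h

lemma maskset_card : ∀ (N p q r : ℕ), p + q + r = N →
    (MaskSet p q r).ncard * (p.factorial * (q.factorial * r.factorial)) = N.factorial := by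
  intro N
  induction N with
  | zero =>
    intro p q r h
    obtain ⟨rfl, rfl, rfl⟩ : p = 0 ∧ q = 0 ∧ r = 0 := by omega
    have : MaskSet 0 0 0 = {([] : List (Fin 3))} := by
      ext m
      simp only [MaskSet, Set.mem_setOf_eq, Set.mem_singleton_iff]
      constructor
      · rintro ⟨h0, h1, h2⟩
        have := count_sum_fin3 m
        exact List.eq_nil_of_length_eq_zero (by omega)
      · rintro rfl; simp
    rw [this, Set.ncard_singleton]
    simp [Nat.factorial]
  | succ N ih =>
    intro p q r h
    set A0 : Set (List (Fin 3)) :=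
      {t | t.count 0 + 1 = p ∧ t.count 1 = q ∧ t.count 2 = r} with hA0
    set A1 : Set (List (Fin 3)) :=
      {t | t.count 0 = p ∧ t.count 1 + 1 = q ∧ t.count 2 = r} with hA1
    set A2 : Set (List (Fin 3)) :=
      {t | t.count 0 = p ∧ t.count 1 = q ∧ t.count 2 + 1 = r} with hA2
    have hsplit : MaskSet p q r =
        (List.cons 0 '' A0) ∪ ((List.cons 1 '' A1) ∪ (List.cons 2 '' A2)) := by
      ext m
      constructor
      · rintro ⟨h0, h1, h2⟩
        have hlen : m.length = N + 1 := by
          have := count_sum_fin3 m; omega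
        cases m with
        | nil => simp at hlen
        | cons c t =>
          simp only [List.count_cons] at h0 h1 h2
          rcases fin3_cases c with rfl | rfl | rfl
          · norm_num at h0 h1 h2
            exact Or.inl ⟨t, ⟨h0, h1, h2⟩, rfl⟩
          · norm_num at h0 h1 h2
            exact Or.inr (Or.inl ⟨t, ⟨h0, h1, h2⟩, rfl⟩)
          · norm_num at h0 h1 h2
            exact Or.inr (Or.inr ⟨t, ⟨h0, h1, h2⟩, rfl⟩)
      · rintro (⟨t, ⟨h0, h1, h2⟩, rfl⟩ | ⟨t, ⟨h0, h1, h2⟩, rfl⟩ | ⟨t, ⟨h0, h1, h2⟩, rfl⟩) <;>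
          refine ⟨?_, ?_, ?_⟩ <;> simp [List.count_cons] <;> omega
    have hsub0 : List.cons 0 '' A0 ⊆ MaskSet p q r := by rw [hsplit]; exact Set.subset_union_left
    have hsub1 : List.cons 1 '' A1 ⊆ MaskSet p q r := by
      rw [hsplit]; exact Set.subset_union_of_subset_right Set.subset_union_left _
    have hsub2 : List.cons 2 '' A2 ⊆ MaskSet p q r := by
      rw [hsplit]; exact Set.subset_union_of_subset_right Set.subset_union_right _
    have hfin := maskset_finite p q r
    have hd01 : Disjoint (List.cons 0 '' A0) (List.cons 1 '' A1) := by
      rw [Set.disjoint_left]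
      rintro m ⟨t, -, rfl⟩ ⟨t', -, h⟩
      injection h with h1 h2
      exact absurd h1 (by decide)
    have hd02 : Disjoint (List.cons 0 '' A0) (List.cons 2 '' A2) := by
      rw [Set.disjoint_left]
      rintro m ⟨t, -, rfl⟩ ⟨t', -, h⟩
      injection h with h1 h2
      exact absurd h1 (by decide)
    have hd12 : Disjoint (List.cons 1 '' A1) (List.cons 2 '' A2) := by
      rw [Set.disjoint_left]
      rintro m ⟨t, -, rfl⟩ ⟨t', -, h⟩
      injection h with h1 h2
      exact absurd h1 (by decide)
    have hncard : (MaskSet p q r).ncard =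
        A0.ncard + (A1.ncard + A2.ncard) := by
      rw [hsplit, Set.ncard_union_eq (Set.disjoint_union_right.mpr ⟨hd01, hd02⟩)
        (hfin.subset hsub0) ((hfin.subset hsub1).union (hfin.subset hsub2)),
        Set.ncard_union_eq hd12 (hfin.subset hsub1) (hfin.subset hsub2),
        Set.ncard_image_of_injective _ (cons_inj_fin3 0),
        Set.ncard_image_of_injective _ (cons_inj_fin3 1),
        Set.ncard_image_of_injective _ (cons_inj_fin3 2)]
    have e0 : A0.ncard * (p.factorial * (q.factorial * r.factorial)) = p * N.factorial := by
      cases p with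
      | zero =>
        have : A0 = ∅ := by
          ext t; simp only [hA0, Set.mem_setOf_eq, Set.mem_empty_iff_false, iff_false]
          rintro ⟨h0, -, -⟩; omega
        rw [this, Set.ncard_empty]; ring
      | succ p' =>
        have hA : A0 = MaskSet p' q r := by
          ext t; simp only [hA0, MaskSet, Set.mem_setOf_eq]; omega
        rw [hA, Nat.factorial_succ]
        calc (MaskSet p' q r).ncard * ((p' + 1) * p'.factorial * (q.factorial * r.factorial))
            = (p' + 1) * ((MaskSet p' q r).ncard *
              (p'.factorial * (q.factorial * r.factorial))) := by ring
          _ = (p' + 1) * N.factorial := by rw [ih p' q r (by omega)]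
    have e1 : A1.ncard * (p.factorial * (q.factorial * r.factorial)) = q * N.factorial := by
      cases q with
      | zero =>
        have : A1 = ∅ := by
          ext t; simp only [hA1, Set.mem_setOf_eq, Set.mem_empty_iff_false, iff_false]
          rintro ⟨-, h1, -⟩; omega
        rw [this, Set.ncard_empty]; ring
      | succ q' =>
        have hA : A1 = MaskSet p q' r := by
          ext t; simp only [hA1, MaskSet, Set.mem_setOf_eq]; omega
        rw [hA, Nat.factorial_succ]
        calc (MaskSet p q' r).ncard * (p.factorial * ((q' + 1) * q'.factorial * r.factorial))
            = (q' + 1) * ((MaskSet p q' r).ncard *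
              (p.factorial * (q'.factorial * r.factorial))) := by ring
          _ = (q' + 1) * N.factorial := by rw [ih p q' r (by omega)]
    have e2 : A2.ncard * (p.factorial * (q.factorial * r.factorial)) = r * N.factorial := by
      cases r with
      | zero =>
        have : A2 = ∅ := by
          ext t; simp only [hA2, Set.mem_setOf_eq, Set.mem_empty_iff_false, iff_false]
          rintro ⟨-, -, h2⟩; omega
        rw [this, Set.ncard_empty]; ring
      | succ r' =>
        have hA : A2 = MaskSet p q r' := by
          ext t; simp only [hA2, MaskSet, Set.mem_setOf_eq]; omega
        rw [hA, Nat.factorial_succ]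
        calc (MaskSet p q r').ncard * (p.factorial * (q.factorial * ((r' + 1) * r'.factorial)))
            = (r' + 1) * ((MaskSet p q r').ncard *
              (p.factorial * (q.factorial * r'.factorial))) := by ring
          _ = (r' + 1) * N.factorial := by rw [ih p q r' (by omega)]
    rw [hncard]
    calc (A0.ncard + (A1.ncard + A2.ncard)) * (p.factorial * (q.factorial * r.factorial))
        = A0.ncard * (p.factorial * (q.factorial * r.factorial)) +
          (A1.ncard * (p.factorial * (q.factorial * r.factorial)) +
           A2.ncard * (p.factorial * (q.factorial * r.factorial))) := by ring
      _ = p * N.factorial + (q * N.factorial + r * N.factorial) := by rw [e0, e1, e2]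
      _ = (N + 1) * N.factorial := by rw [← h]; ring
      _ = (N + 1).factorial := (Nat.factorial_succ N).symm

end Counting
section Final

lemma SW_leaf : SW BTM.leaf = {([] : Word)} := by
  ext w
  simp only [SW, Set.mem_setOf_eq, Set.mem_singleton_iff, Bmap_eq_leaf_iff]
  constructor
  · rintro ⟨-, h⟩; exact h
  · rintro rfl
    exact ⟨fun a ha => absurd ha List.not_mem_nil, rfl⟩

lemma injOn_merge (L R : BTM) (k : ℕ+) :
    Set.InjOn (fun x : List (Fin 3) × Word × Word =>
      merge (root L) x.1 x.2.1 (x.2.2.map (fun y => y + root L)) ++ [root L])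
      ((MaskSet L.size ((k : ℕ) - 1) R.size) ×ˢ (SW L ×ˢ SW R)) := by
  set a := root L with ha
  rintro ⟨m, u, v⟩ ⟨⟨hm0, hm1, hm2⟩, hu, hv⟩ ⟨m', u', v'⟩ ⟨⟨hm0', hm1', hm2'⟩, hu', hv'⟩ heq
  simp only at heq
  have hg : merge a m u (v.map (fun y => y + a)) = merge a m' u' (v'.map (fun y => y + a)) := by
    have := congrArg List.dropLast heq
    simpa using this
  have spec1 := merge_spec a m u (v.map (fun y => y + a)) (SW_lt_root hu)
    (by rintro x hx; rw [List.mem_map] at hx; obtain ⟨y, hy, rfl⟩ := hx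
        exact pnat_lt_add_left a y)
    (by rw [hm0, length_of_Bmap hu.2])
    (by rw [hm2, List.length_map, length_of_Bmap hv.2])
  have spec2 := merge_spec a m' u' (v'.map (fun y => y + a)) (SW_lt_root hu')
    (by rintro x hx; rw [List.mem_map] at hx; obtain ⟨y, hy, rfl⟩ := hx
        exact pnat_lt_add_left a y)
    (by rw [hm0', length_of_Bmap hu'.2])
    (by rw [hm2', List.length_map, length_of_Bmap hv'.2])
  obtain ⟨s1, s2, -, s4⟩ := spec1
  obtain ⟨t1, t2, -, t4⟩ := spec2
  have hu_eq : u = u' := by rw [← s1, ← t1, hg]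
  have hv_eq : v.map (fun y => y + a) = v'.map (fun y => y + a) := by rw [← s2, ← t2, hg]
  have hv_eq' : v = v' :=
    List.map_injective_iff.mpr (add_root_strictMono a).injective hv_eq
  have hm_eq : m = m' := by rw [← s4, ← t4, hg]
  simp [hu_eq, hv_eq', hm_eq]

lemma SW_node_image (L R : BTM) (k : ℕ+) :
    SW (BTM.node L k R) = (fun x : List (Fin 3) × Word × Word =>
      merge (root L) x.1 x.2.1 (x.2.2.map (fun y => y + root L)) ++ [root L]) ''
      ((MaskSet L.size ((k : ℕ) - 1) R.size) ×ˢ (SW L ×ˢ SW R)) := by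
  ext w
  rw [Set.mem_image, mem_SW_node]
  constructor
  · rintro ⟨m, u, v, hm, hu, hv, rfl⟩
    exact ⟨(m, u, v), ⟨hm, hu, hv⟩, rfl⟩
  · rintro ⟨⟨m, u, v⟩, ⟨hm, hu, hv⟩, rfl⟩
    exact ⟨m, u, v, hm, hu, hv, rfl⟩

lemma hookProd_pos (T : BTM) : 0 < hookProd T := by
  induction T with
  | leaf => simp [hookProd]
  | node L k R ihL ihR =>
    have hsz : 0 < (BTM.node L k R).size := by
      show 0 < L.size + (k : ℕ) + R.size
      have := k.pos; omega
    exact mul_pos (mul_pos (mul_pos hsz (Nat.factorial_pos _)) ihL) ihR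

theorem key_count (T : BTM) :
    (SW T).Finite ∧ (SW T).ncard * hookProd T = (T.size).factorial := by
  induction T with
  | leaf =>
    rw [SW_leaf]
    exact ⟨Set.finite_singleton _, by simp [hookProd, BTM.size, Set.ncard_singleton]⟩
  | node L k R ihL ihR =>
    obtain ⟨hLf, hLc⟩ := ihL
    obtain ⟨hRf, hRc⟩ := ihR
    have himg := SW_node_image L R k
    have hinj := injOn_merge L R k
    have hfin : (SW (BTM.node L k R)).Finite := by
      rw [himg]
      exact (((maskset_finite _ _ _).prod (hLf.prod hRf)).image _)
    refine ⟨hfin, ?_⟩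
    have hnc : (SW (BTM.node L k R)).ncard =
        (MaskSet L.size ((k : ℕ) - 1) R.size).ncard * ((SW L).ncard * (SW R).ncard) := by
      rw [himg, Set.ncard_image_of_injOn hinj, ncard_prod', ncard_prod']
    have hk1 : 1 ≤ (k : ℕ) := k.one_le
    have hmask := maskset_card (L.size + ((k : ℕ) - 1) + R.size) L.size ((k : ℕ) - 1) R.size rfl
    have hszf : (L.size + ((k : ℕ) - 1) + R.size).factorial =
        (L.size + (k : ℕ) + R.size - 1).factorial := by
      congr 1; omega
    rw [hszf] at hmask
    rw [hnc]
    show (MaskSet L.size ((k : ℕ) - 1) R.size).ncard * ((SW L).ncard * (SW R).ncard) *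
      ((L.size + (k : ℕ) + R.size) * ((k : ℕ) - 1).factorial * hookProd L * hookProd R)
      = (L.size + (k : ℕ) + R.size).factorial
    calc (MaskSet L.size ((k : ℕ) - 1) R.size).ncard * ((SW L).ncard * (SW R).ncard) *
          ((L.size + (k : ℕ) + R.size) * ((k : ℕ) - 1).factorial * hookProd L * hookProd R)
        = (L.size + (k : ℕ) + R.size) * ((MaskSet L.size ((k : ℕ) - 1) R.size).ncard *
            (((SW L).ncard * hookProd L) * (((SW R).ncard * hookProd R) *
              ((k : ℕ) - 1).factorial))) := by ring
      _ = (L.size + (k : ℕ) + R.size) * ((MaskSet L.size ((k : ℕ) - 1) R.size).ncard *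
            ((L.size.factorial) * ((R.size.factorial) * ((k : ℕ) - 1).factorial))) := by
          rw [hLc, hRc]
      _ = (L.size + (k : ℕ) + R.size) * ((MaskSet L.size ((k : ℕ) - 1) R.size).ncard *
            ((L.size.factorial) * (((k : ℕ) - 1).factorial * R.size.factorial))) := by
          ring
      _ = (L.size + (k : ℕ) + R.size) * (L.size + (k : ℕ) + R.size - 1).factorial := by
          rw [hmask]
      _ = (L.size + (k : ℕ) + R.size).factorial := Nat.mul_factorial_pred (by omega)

end Final

theorem hook_length_formula (T : BTM) :
    (fT T : ℚ) = (T.size.factorial : ℚ) / (hookProd T : ℚ) := by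
  have hkey := key_count T
  have hpos : 0 < hookProd T := hookProd_pos T
  have hfT : fT T = (SW T).ncard := rfl
  rw [eq_div_iff (by exact_mod_cast hpos.ne')]
  rw [hfT]
  exact_mod_cast hkey.2
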